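/- Let (W,S) be a Coxeter group, fix a reduced word w = s_{i_1}⋯s_{i_m}, let v ≤ w and let J = {j_1,…,j_r} be the index set of the positive subexpression for v. Let k be the maximal index in {1,…,m} not belonging to J. Then J ∪ {k} is the index set of a positive subexpression of the reduced word for w, i.e., the corresponding subword is reduced, its product u satisfies u ⋗ v in Bruhat order (ℓ(u) = ℓ(v)+1), and J ∪ {k} satisfies the positivity (rightmost reduced) condition for u. -/

import Mathlib

/-!
STATEMENT 10 (key step of Proposition 9.4): let `J` be the index set of the
positive subexpression for `v` in a reduced word `ω` for `w`, and let `k` be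
the maximal index not in `J`.  Then `J ∪ {k}` is the index set of a positive
subexpression (in particular its subword is reduced), and its product `u`
covers `v` in Bruhat order (`ℓ(u) = ℓ(v) + 1`).
-/

namespace PaperStmt

open CoxeterSystem
open List

variable {B : Type} {W : Type} [Group W] {M : CoxeterMatrix B}

/-- Bruhat covering relation (`v ⋖ u`). -/
def BCov (cs : CoxeterSystem M W) (u w : W) : Prop :=
  (∃ t : W, cs.IsReflection t ∧ w = u * t) ∧ cs.length w = cs.length u + 1

/-- The subword of `ω` at positions of `J` that are `< r`. -/
def maskWord (ω : List B) (J : Finset (Fin ω.length)) (r : ℕ) : List B :=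
  ((List.finRange ω.length).filter (fun j => decide (j ∈ J ∧ j.val < r))).map ω.get

/-- Partial product over `J`-indices `< r`. -/
def prefixEl (cs : CoxeterSystem M W) (ω : List B) (J : Finset (Fin ω.length)) (r : ℕ) : W :=
  cs.wordProd (maskWord ω J r)

/-- `J` is the index set of the positive subexpression of `ω` for `v`. -/
def IsPosSubexpr (cs : CoxeterSystem M W) (ω : List B) (J : Finset (Fin ω.length)) (v : W) :
    Prop :=
  cs.wordProd (maskWord ω J ω.length) = v ∧
  J.card = cs.length v ∧
  ∀ r : Fin ω.length,
    cs.length (prefixEl cs ω J r.val * cs.simple (ω.get r)) > cs.length (prefixEl cs ω J r.val)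

def par (n : ℕ) : Bool := decide (n % 2 = 1)

lemma par_add (a b : ℕ) : par (a + b) = Bool.xor (par a) (par b) := by
  unfold par
  rcases Nat.mod_two_eq_zero_or_one a with ha | ha <;>
    rcases Nat.mod_two_eq_zero_or_one b with hb | hb <;>
      simp [Nat.add_mod, ha, hb]

lemma cancel_conj (g a : W) (hg : g * g = 1) : g * (g * a * g) * g = a := by
  have h1 : g * (g * a * g) * g = (g * g) * a * (g * g) := by group
  rw [h1, hg, one_mul, mul_one]

lemma conj_eq_iff (g a b : W) (hg : g * g = 1) : g * a * g = b ↔ a = g * b * g := by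
  constructor
  · rintro rfl
    exact (cancel_conj g a hg).symm
  · rintro rfl
    exact cancel_conj g b hg

open scoped Classical in
/-- The sign involution on `W × Bool` associated to a simple reflection. -/
noncomputable def eta (cs : CoxeterSystem M W) (i : B) : Equiv.Perm (W × Bool) :=
  Function.Involutive.toPerm
    (fun x => (cs.simple i * x.1 * cs.simple i, Bool.xor (decide (x.1 = cs.simple i)) x.2))
    (by
      rintro ⟨t, e⟩
      simp only [Prod.mk.injEq]
      constructor
      · exact cancel_conj _ _ (cs.simple_mul_simple_self i)
      · have : (cs.simple i * t * cs.simple i = cs.simple i) ↔ t = cs.simple i := by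
          rw [conj_eq_iff _ _ _ (cs.simple_mul_simple_self i), simple_mul_simple_self, one_mul]
        rw [decide_eq_decide.mpr this, ← Bool.xor_assoc, Bool.xor_self, Bool.false_xor])

open scoped Classical in
lemma eta_apply (cs : CoxeterSystem M W) (i : B) (t : W) (e : Bool) :
    eta cs i (t, e) = (cs.simple i * t * cs.simple i,
      Bool.xor (decide (t = cs.simple i)) e) := rfl

open scoped Classical in
lemma eta_mul_pow_apply (cs : CoxeterSystem M W) (i j : B) (n : ℕ) (t : W) (e : Bool) :
    ((eta cs i * eta cs j) ^ n) (t, e) =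
      ((cs.simple i * cs.simple j) ^ n * t * ((cs.simple i * cs.simple j) ^ n)⁻¹,
        Bool.xor (par ((List.range (2*n)).countP
            (fun b => decide (cs.simple j * (cs.simple i * cs.simple j) ^ b = t)))) e) := by
  set p := cs.simple i * cs.simple j with hp
  set q := cs.simple j with hq
  have hqq : q * q = 1 := cs.simple_mul_simple_self j
  have hii : cs.simple i * cs.simple i = 1 := cs.simple_mul_simple_self i
  have hqsq : q * cs.simple i * q = q * p := by
    rw [hp, ← mul_assoc]
  have hpinvq : p⁻¹ * q = q * p := by
    have : p⁻¹ = q * cs.simple i := by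
      rw [hp, mul_inv_rev, hq, inv_simple, inv_simple]
    rw [this, mul_assoc, ← hp]
  induction n generalizing t e with
  | zero => simp [par]
  | succ n ih =>
    rw [pow_succ, Equiv.Perm.mul_apply]
    -- apply `eta i * eta j` once
    have h1 : (eta cs i * eta cs j) (t, e) =
        (p * t * p⁻¹, Bool.xor (decide (q * p ^ 1 = t)) (Bool.xor (decide (q * p ^ 0 = t)) e)) := by
      rw [Equiv.Perm.mul_apply, eta_apply, eta_apply]
      have hfst : cs.simple i * (q * t * q) * cs.simple i = p * t * p⁻¹ := by
        rw [hp, mul_inv_rev, hq, inv_simple, inv_simple]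
        group
      have hiff1 : (q * t * q = cs.simple i) ↔ (q * p ^ 1 = t) := by
        rw [conj_eq_iff _ _ _ hqq, hqsq, pow_one, eq_comm]
      have hiff0 : (t = q) ↔ (q * p ^ 0 = t) := by
        rw [pow_zero, mul_one, eq_comm]
      rw [hfst, decide_eq_decide.mpr hiff1, decide_eq_decide.mpr hiff0]
    rw [h1, ih]
    have hkey : ∀ b : ℕ, (q * p ^ b = p * t * p⁻¹) ↔ (q * p ^ (2 + b) = t) := by
      intro b
      have hL : p⁻¹ * (q * p ^ b) * p = q * p ^ (2 + b) := by
        calc p⁻¹ * (q * p ^ b) * p = (p⁻¹ * q) * (p ^ b * p) := by group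
          _ = (q * p) * (p ^ b * p) := by rw [hpinvq]
          _ = q * (p * (p ^ b * p)) := by rw [mul_assoc]
          _ = q * p ^ (2 + b) := by
              congr 1
              rw [← pow_succ, ← pow_succ']
              congr 1
              omega
      constructor
      · intro h
        rw [← hL, h]
        group
      · intro h
        rw [← hL] at h
        rw [← h]
        group
    rw [Prod.mk.injEq]
    constructor
    · rw [pow_succ]
      group
    · have hcongr : (List.range (2*n)).countP
          (fun b => decide (q * p ^ b = p * t * p⁻¹)) =
          (List.range (2*n)).countP (fun b => decide (q * p ^ (2 + b) = t)) := by
        apply List.countP_congr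
        intro b _
        simpa using hkey b
      have hrange : (2 * (n+1)) = 2 + 2 * n := by omega
      rw [hcongr, hrange, List.range_add, List.countP_append]
      have hmap : (List.countP (fun b => decide (q * p ^ b = t))
            ((List.range (2*n)).map (fun x => 2 + x))) =
          (List.range (2*n)).countP (fun b => decide (q * p ^ (2 + b) = t)) := by
        rw [List.countP_map]
        rfl
      rw [hmap]
      have hr2 : List.countP (fun b => decide (q * p ^ b = t)) (List.range 2) =
          (if (q * p ^ 0 = t) then 1 else 0) + (if (q * p ^ 1 = t) then 1 else 0) := by
        show List.countP _ [0, 1] = _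
        rw [List.countP_cons, List.countP_cons, List.countP_nil]
        simp only [decide_eq_true_eq]
        split <;> split <;> simp
      rw [par_add, hr2, par_add]
      have e0 : par (if (q * p ^ 0 = t) then 1 else 0) = decide (q * p ^ 0 = t) := by
        split <;> simp_all [par]
      have e1 : par (if (q * p ^ 1 = t) then 1 else 0) = decide (q * p ^ 1 = t) := by
        split <;> simp_all [par]
      rw [e0, e1]
      generalize par ((List.range (2*n)).countP (fun b => decide (q * p ^ (2+b) = t))) = c
      generalize decide (q * p ^ 0 = t) = d0
      generalize decide (q * p ^ 1 = t) = d1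
      cases c <;> cases d0 <;> cases d1 <;> cases e <;> rfl

open scoped Classical in
lemma eta_liftable (cs : CoxeterSystem M W) : M.IsLiftable (eta cs) := by
  intro i j
  apply Equiv.ext
  rintro ⟨t, e⟩
  rw [eta_mul_pow_apply]
  set m := M i j with hm
  have hpm : (cs.simple i * cs.simple j) ^ m = 1 := cs.simple_mul_simple_pow i j
  have hsplit : 2 * m = m + m := by omega
  rw [hsplit, List.range_add, List.countP_append]
  have hmap : (List.countP (fun b => decide (cs.simple j * (cs.simple i * cs.simple j) ^ b = t))
        ((List.range m).map (fun x => m + x))) =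
      (List.range m).countP
        (fun b => decide (cs.simple j * (cs.simple i * cs.simple j) ^ b = t)) := by
    rw [List.countP_map]
    apply List.countP_congr
    intro b _
    simp only [Function.comp_apply, decide_eq_true_eq]
    rw [pow_add, hpm, one_mul]
  rw [hmap, hpm]
  have : ∀ c : ℕ, par (c + c) = false := by
    intro c
    rw [par_add, Bool.xor_self]
  rw [this]
  simp

/-- The sign homomorphism `W →* Perm (W × Bool)`. -/
noncomputable def theta (cs : CoxeterSystem M W) : W →* Equiv.Perm (W × Bool) :=
  cs.lift ⟨eta cs, eta_liftable cs⟩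

lemma theta_simple (cs : CoxeterSystem M W) (i : B) :
    theta cs (cs.simple i) = eta cs i := cs.lift_apply_simple (eta_liftable cs) i

/-- Whether a reduced word for `w` contains `t` an odd number of times
in its right inversion sequence. -/
noncomputable def nflip (cs : CoxeterSystem M W) (w t : W) : Bool :=
  ((theta cs w) (t, false)).2

open scoped Classical in
lemma theta_apply (cs : CoxeterSystem M W) (w t : W) (e : Bool) :
    theta cs w (t, e) = (w * t * w⁻¹, Bool.xor (nflip cs w t) e) := by
  induction w using cs.simple_induction_left generalizing t e with
  | one =>
    simp [nflip, map_one]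
  | mul_simple_left w i ih =>
    have hmul : theta cs (cs.simple i * w) = eta cs i * theta cs w := by
      rw [map_mul, theta_simple]
    have happ : ∀ e' : Bool, theta cs (cs.simple i * w) (t, e') =
        ((cs.simple i * w) * t * (cs.simple i * w)⁻¹,
          Bool.xor (decide (w * t * w⁻¹ = cs.simple i)) (Bool.xor (nflip cs w t) e')) := by
      intro e'
      rw [hmul, Equiv.Perm.mul_apply, ih, eta_apply]
      congr 1
      rw [mul_inv_rev, inv_simple]
      group
    have hn : nflip cs (cs.simple i * w) t =
        Bool.xor (decide (w * t * w⁻¹ = cs.simple i)) (nflip cs w t) := by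
      unfold nflip
      rw [happ false]
      simp only [Bool.xor_false]
      rfl
    rw [happ e, hn, Bool.xor_assoc]

lemma nflip_mul (cs : CoxeterSystem M W) (w₁ w₂ t : W) :
    nflip cs (w₁ * w₂) t = Bool.xor (nflip cs w₂ t) (nflip cs w₁ (w₂ * t * w₂⁻¹)) := by
  have h := theta_apply cs (w₁ * w₂) t false
  rw [map_mul, Equiv.Perm.mul_apply, theta_apply cs w₂ t false, theta_apply cs w₁] at h
  have h2 := congrArg Prod.snd h
  simp only [Bool.xor_false] at h2
  rw [← h2, Bool.xor_comm]

open scoped Classical in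
lemma nflip_simple (cs : CoxeterSystem M W) (i : B) (t : W) :
    nflip cs (cs.simple i) t = decide (t = cs.simple i) := by
  unfold nflip
  rw [theta_simple, eta_apply, Bool.xor_false]

lemma nflip_one (cs : CoxeterSystem M W) (t : W) : nflip cs 1 t = false := by
  unfold nflip
  simp [map_one]

lemma nflip_inv (cs : CoxeterSystem M W) (w t : W) :
    nflip cs w⁻¹ t = nflip cs w (w⁻¹ * t * w) := by
  have h := nflip_mul cs w w⁻¹ t
  rw [mul_inv_cancel, nflip_one, inv_inv] at h
  cases hx : nflip cs w⁻¹ t <;> cases hy : nflip cs w (w⁻¹ * t * w) <;> simp_all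

open scoped Classical in
lemma nflip_wordProd (cs : CoxeterSystem M W) (l : List B) (t : W) :
    nflip cs (cs.wordProd l) t = par ((cs.rightInvSeq l).count t) := by
  induction l with
  | nil =>
    rw [wordProd_nil, nflip_one]
    simp [rightInvSeq, par]
  | cons i l' ih =>
    rw [wordProd_cons, nflip_mul, ih]
    have hris : cs.rightInvSeq (i :: l') =
        ((cs.wordProd l')⁻¹ * cs.simple i * cs.wordProd l') :: cs.rightInvSeq l' := rfl
    rw [hris, List.count_cons, nflip_simple, par_add]
    congr 1
    have hiff : ((cs.wordProd l')⁻¹ * cs.simple i * cs.wordProd l' = t)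
        ↔ (cs.wordProd l' * t * (cs.wordProd l')⁻¹ = cs.simple i) := by
      constructor
      · rintro rfl
        group
      · intro hx
        rw [← hx]
        group
    have : ((cs.wordProd l')⁻¹ * cs.simple i * cs.wordProd l' == t) =
        decide ((cs.wordProd l')⁻¹ * cs.simple i * cs.wordProd l' = t) := by
      rfl
    rw [this]
    by_cases hc : (cs.wordProd l')⁻¹ * cs.simple i * cs.wordProd l' = t
    · rw [decide_eq_true hc, decide_eq_true (hiff.mp hc)]
      simp [par]
    · rw [decide_eq_false hc, decide_eq_false (fun hx => hc (hiff.mpr hx))]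
      simp [par]

open scoped Classical in
lemma mem_ris_of_nflip (cs : CoxeterSystem M W) (l : List B) (t : W)
    (h : nflip cs (cs.wordProd l) t = true) : t ∈ cs.rightInvSeq l := by
  rw [nflip_wordProd] at h
  unfold par at h
  rw [decide_eq_true_eq] at h
  have : 0 < (cs.rightInvSeq l).count t := by omega
  exact List.count_pos_iff.mp this

lemma inversion_of_nflip (cs : CoxeterSystem M W) {l : List B} (hred : cs.IsReduced l) {t : W}
    (h : nflip cs (cs.wordProd l) t = true) :
    cs.length (cs.wordProd l * t) < cs.length (cs.wordProd l) :=
  (cs.isRightInversion_of_mem_rightInvSeq hred (mem_ris_of_nflip cs l t h)).2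

open scoped Classical in
lemma nflip_self (cs : CoxeterSystem M W) {t : W} (ht : cs.IsReflection t) :
    nflip cs t t = true := by
  obtain ⟨x, i, rfl⟩ := ht
  set t := x * cs.simple i * x⁻¹ with hts
  have h1 : nflip cs t t = Bool.xor (nflip cs x⁻¹ t) (nflip cs (x * cs.simple i)
      (x⁻¹ * t * (x⁻¹)⁻¹)) := by
    rw [hts, nflip_mul cs (x * cs.simple i) x⁻¹]
  have h2 : x⁻¹ * t * (x⁻¹)⁻¹ = cs.simple i := by rw [hts]; group
  have h3 : nflip cs (x * cs.simple i) (cs.simple i) =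
      Bool.xor (nflip cs (cs.simple i) (cs.simple i)) (nflip cs x
        (cs.simple i * cs.simple i * (cs.simple i)⁻¹)) := nflip_mul cs x (cs.simple i) _
  have h4 : cs.simple i * cs.simple i * (cs.simple i)⁻¹ = cs.simple i := by group
  have h5 : nflip cs (cs.simple i) (cs.simple i) = true := by
    rw [nflip_simple]
    simp
  have h6 : nflip cs x⁻¹ t = nflip cs x (x⁻¹ * t * x) := nflip_inv cs x t
  have h7 : x⁻¹ * t * x = cs.simple i := by rw [hts]; group
  rw [h1, h2, h3, h4, h5, h6, h7]
  cases nflip cs x (cs.simple i) <;> rfl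

lemma nflip_of_inversion (cs : CoxeterSystem M W) {w t : W} (ht : cs.IsReflection t)
    (h : cs.length (w * t) < cs.length w) : nflip cs w t = true := by
  by_contra hf
  rw [Bool.not_eq_true] at hf
  have h2 : nflip cs (w * t) t = true := by
    rw [nflip_mul]
    have : t * t * t⁻¹ = t := by group
    rw [this, nflip_self cs ht, hf]
    rfl
  obtain ⟨l, hl, hwt⟩ := cs.exists_reduced_word' (w * t)
  rw [hwt] at h2
  have h3 := inversion_of_nflip cs hl h2
  rw [← hwt, mul_assoc, ht.mul_self, mul_one] at h3
  omega

lemma mem_take_finRange {n r : ℕ} {j : Fin n} (h : j ∈ (List.finRange n).take r) : j.val < r := by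
  obtain ⟨i, hi, hij⟩ := List.mem_iff_getElem.mp h
  rw [List.length_take, List.length_finRange] at hi
  rw [List.getElem_take, List.getElem_finRange] at hij
  have := congrArg Fin.val hij
  simp at this
  omega

lemma mem_drop_finRange {n r : ℕ} {j : Fin n} (h : j ∈ (List.finRange n).drop r) : r ≤ j.val := by
  obtain ⟨i, hi, hij⟩ := List.mem_iff_getElem.mp h
  rw [List.getElem_drop, List.getElem_finRange] at hij
  have := congrArg Fin.val hij
  simp at this
  omega

lemma maskWord_eq (ω : List B) (J : Finset (Fin ω.length)) (r : ℕ) :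
    maskWord ω J r =
      (((List.finRange ω.length).take r).filter (fun j => decide (j ∈ J))).map ω.get := by
  unfold maskWord
  congr 1
  conv_lhs => rw [← List.take_append_drop r (List.finRange ω.length)]
  rw [List.filter_append]
  have h1 : ((List.finRange ω.length).take r).filter (fun j => decide (j ∈ J ∧ j.val < r)) =
      ((List.finRange ω.length).take r).filter (fun j => decide (j ∈ J)) := by
    apply List.filter_congr
    intro j hj
    have hjr : j.val < r := mem_take_finRange hj
    rw [decide_eq_decide]
    exact and_iff_left hjr
  have h2 : ((List.finRange ω.length).drop r).filter (fun j => decide (j ∈ J ∧ j.val < r)) =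
      [] := by
    rw [List.filter_eq_nil_iff]
    intro j hj
    have := mem_drop_finRange hj
    simp only [decide_eq_true_eq]
    rintro ⟨-, h⟩
    omega
  rw [h1, h2, List.append_nil]

lemma maskWord_zero (ω : List B) (J : Finset (Fin ω.length)) : maskWord ω J 0 = [] := by
  rw [maskWord_eq]
  simp

lemma maskWord_succ (ω : List B) (J : Finset (Fin ω.length)) (r : ℕ) (hr : r < ω.length) :
    maskWord ω J (r + 1) = maskWord ω J r ++
      (if (⟨r, hr⟩ : Fin ω.length) ∈ J then [ω.get ⟨r, hr⟩] else []) := by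
  rw [maskWord_eq, maskWord_eq, List.take_succ]
  have hrlt : r < (List.finRange ω.length).length := by simpa using hr
  have hsome : (List.finRange ω.length)[r]? = some (⟨r, hr⟩ : Fin ω.length) := by
    rw [List.getElem?_eq_getElem hrlt]
    simp
  rw [hsome]
  show ((((List.finRange ω.length).take r) ++ [(⟨r, hr⟩ : Fin ω.length)]).filter
      (fun j => decide (j ∈ J))).map ω.get = _
  rw [List.filter_append, List.map_append]
  congr 1
  by_cases hm : (⟨r, hr⟩ : Fin ω.length) ∈ J <;> simp [hm]

lemma maskWord_reduced_of_pos (cs : CoxeterSystem M W) (ω : List B) (J : Finset (Fin ω.length))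
    (hpos : ∀ r : Fin ω.length,
      cs.length (prefixEl cs ω J r.val * cs.simple (ω.get r)) > cs.length (prefixEl cs ω J r.val)) :
    ∀ r, r ≤ ω.length →
      cs.length (cs.wordProd (maskWord ω J r)) = (maskWord ω J r).length := by
  intro r
  induction r with
  | zero =>
    intro _
    rw [maskWord_zero]
    simp
  | succ r ih =>
    intro hr1
    have hr : r < ω.length := hr1
    rw [maskWord_succ ω J r hr]
    by_cases hm : (⟨r, hr⟩ : Fin ω.length) ∈ J
    · rw [if_pos hm, cs.wordProd_append, cs.wordProd_singleton, List.length_append]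
      have hp := hpos ⟨r, hr⟩
      unfold prefixEl at hp
      simp only [Fin.val_mk] at hp
      have hih := ih (by omega)
      have hub : cs.length (cs.wordProd (maskWord ω J r) * cs.simple (ω.get ⟨r, hr⟩)) ≤
          cs.length (cs.wordProd (maskWord ω J r)) + 1 := by
        have := cs.length_mul_le (cs.wordProd (maskWord ω J r)) (cs.simple (ω.get ⟨r, hr⟩))
        rw [cs.length_simple] at this
        omega
      simp only [List.length_cons, List.length_nil]
      omega
    · rw [if_neg hm, List.append_nil]
      exact ih (by omega)

lemma isReduced_append {cs : CoxeterSystem M W} {a b : List B} (h : cs.IsReduced (a ++ b)) :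
    cs.IsReduced a ∧ cs.IsReduced b := by
  unfold CoxeterSystem.IsReduced at *
  rw [cs.wordProd_append, List.length_append] at h
  have ha := cs.length_wordProd_le a
  have hb := cs.length_wordProd_le b
  have hab := cs.length_mul_le (cs.wordProd a) (cs.wordProd b)
  constructor <;> omega


lemma nflip_iff_inversion (cs : CoxeterSystem M W) {w t : W} (ht : cs.IsReflection t) :
    nflip cs w t = true ↔ cs.length (w * t) < cs.length w := by
  constructor
  · intro h
    obtain ⟨l, hl, hwl⟩ := cs.exists_reduced_word' w
    rw [hwl] at h ⊢
    exact inversion_of_nflip cs hl h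
  · exact nflip_of_inversion cs ht

lemma key_ineq (cs : CoxeterSystem M W) (P Q : W) (i : B)
    (hP : ¬ cs.length (P * cs.simple i) < cs.length P)
    (hQ : cs.length Q < cs.length (cs.simple i * Q)) :
    cs.length (P * Q) < cs.length (P * (cs.simple i * Q)) := by
  have ht : cs.IsReflection (Q⁻¹ * cs.simple i * Q) := ⟨Q⁻¹, i, by rw [inv_inv]⟩
  have heq : (P * Q) * (Q⁻¹ * cs.simple i * Q) = P * (cs.simple i * Q) := by group
  have hne : cs.length ((P * Q) * (Q⁻¹ * cs.simple i * Q)) ≠ cs.length (P * Q) :=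
    ht.length_mul_left_ne (P * Q)
  suffices hs : ¬ cs.length ((P * Q) * (Q⁻¹ * cs.simple i * Q)) < cs.length (P * Q) by
    rw [← heq]
    omega
  intro hlt
  have h1 : nflip cs (P * Q) (Q⁻¹ * cs.simple i * Q) = true :=
    (nflip_iff_inversion cs ht).mpr hlt
  have h2 := nflip_mul cs P Q (Q⁻¹ * cs.simple i * Q)
  have hQtQ : Q * (Q⁻¹ * cs.simple i * Q) * Q⁻¹ = cs.simple i := by group
  have h3 : nflip cs P (cs.simple i) = false := by
    by_contra hc
    rw [Bool.not_eq_false] at hc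
    exact hP ((nflip_iff_inversion cs (cs.isReflection_simple i)).mp hc)
  have h4 : nflip cs Q (Q⁻¹ * cs.simple i * Q) = false := by
    have hcan : (cs.simple i * Q) * (Q⁻¹ * cs.simple i * Q) = Q := by
      calc (cs.simple i * Q) * (Q⁻¹ * cs.simple i * Q)
          = (cs.simple i * cs.simple i) * Q := by group
        _ = Q := by rw [cs.simple_mul_simple_self, one_mul]
    have h5 : cs.length ((cs.simple i * Q) * (Q⁻¹ * cs.simple i * Q)) <
        cs.length (cs.simple i * Q) := by
      rw [hcan]
      exact hQ
    have h6 : nflip cs (cs.simple i * Q) (Q⁻¹ * cs.simple i * Q) = true :=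
      (nflip_iff_inversion cs ht).mpr h5
    have h7 := nflip_mul cs (cs.simple i) Q (Q⁻¹ * cs.simple i * Q)
    rw [hQtQ, nflip_simple, h6] at h7
    cases hqq : nflip cs Q (Q⁻¹ * cs.simple i * Q)
    · rfl
    · rw [hqq] at h7
      simp at h7
  rw [h2, hQtQ, h3, h4] at h1
  simp at h1

theorem insert_max_missing_index_is_positive_and_covers
    (cs : CoxeterSystem M W) (ω : List B) (v : W) (J : Finset (Fin ω.length))
    (hred : cs.IsReduced ω)
    (hpos : IsPosSubexpr cs ω J v)
    (k : Fin ω.length) (hk : k ∉ J) (hkmax : ∀ r : Fin ω.length, k < r → r ∈ J) :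
    IsPosSubexpr cs ω (insert k J)
        (cs.wordProd (maskWord ω (insert k J) ω.length)) ∧
      BCov cs v (cs.wordProd (maskWord ω (insert k J) ω.length)) := by
  obtain ⟨hv, hcard, hposJ⟩ := hpos
  have hkm : k.val < ω.length := k.isLt
  -- masks agree up to position `k`
  have agree : ∀ r : ℕ, r ≤ k.val → maskWord ω (insert k J) r = maskWord ω J r := by
    intro r hr
    rw [maskWord_eq, maskWord_eq]
    congr 1
    apply List.filter_congr
    intro j hj
    have hjr : j.val < r := mem_take_finRange hj
    have hne : j ≠ k := by
      intro h
      subst h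
      omega
    rw [decide_eq_decide, Finset.mem_insert]
    exact or_iff_right hne
  -- tail description of masks for `insert k J`
  have maskIns : ∀ d : ℕ, k.val + d ≤ ω.length →
      maskWord ω (insert k J) (k.val + d) =
        maskWord ω J k.val ++ (ω.drop k.val).take d := by
    intro d
    induction d with
    | zero =>
      intro _
      rw [List.take_zero, List.append_nil, Nat.add_zero]
      exact agree k.val le_rfl
    | succ d ih =>
      intro hd
      have hrm : k.val + d < ω.length := by omega
      rw [show k.val + (d + 1) = (k.val + d) + 1 from rfl]
      rw [maskWord_succ ω (insert k J) (k.val + d) hrm, ih (by omega)]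
      have hmem : (⟨k.val + d, hrm⟩ : Fin ω.length) ∈ insert k J := by
        rcases Nat.eq_zero_or_pos d with hd0 | hdpos
        · subst hd0
          have hk0 : (⟨k.val + 0, hrm⟩ : Fin ω.length) = k := by
            apply Fin.ext
            simp
          rw [hk0]
          exact Finset.mem_insert_self k J
        · apply Finset.mem_insert_of_mem
          apply hkmax
          rw [Fin.lt_def]
          simp only [Fin.val_mk]
          omega
      rw [if_pos hmem, List.append_assoc]
      congr 1
      have hlt : d < (ω.drop k.val).length := by
        rw [List.length_drop]
        omega
      rw [List.take_succ, List.getElem?_eq_getElem hlt]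
      simp [List.getElem_drop, List.get_eq_getElem]
  -- tail description of masks for `J`
  have maskJ : ∀ d : ℕ, (k.val + 1) + d ≤ ω.length →
      maskWord ω J ((k.val + 1) + d) =
        maskWord ω J k.val ++ (ω.drop (k.val + 1)).take d := by
    intro d
    induction d with
    | zero =>
      intro _
      rw [List.take_zero, List.append_nil, Nat.add_zero]
      rw [maskWord_succ ω J k.val hkm]
      have hk0 : (⟨k.val, hkm⟩ : Fin ω.length) = k := by
        apply Fin.ext
        simp
      rw [hk0, if_neg hk, List.append_nil]
    | succ d ih =>
      intro hd
      have hrm : (k.val + 1) + d < ω.length := by omega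
      rw [show (k.val + 1) + (d + 1) = ((k.val + 1) + d) + 1 from rfl]
      rw [maskWord_succ ω J ((k.val + 1) + d) hrm, ih (by omega)]
      have hmem : (⟨(k.val + 1) + d, hrm⟩ : Fin ω.length) ∈ J := by
        apply hkmax
        rw [Fin.lt_def]
        simp only [Fin.val_mk]
        omega
      rw [if_pos hmem, List.append_assoc]
      congr 1
      have hlt : d < (ω.drop (k.val + 1)).length := by
        rw [List.length_drop]
        omega
      rw [List.take_succ, List.getElem?_eq_getElem hlt]
      simp [List.getElem_drop, List.get_eq_getElem]
  -- full-mask decompositions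
  have hsplitJ : maskWord ω J ω.length = maskWord ω J k.val ++ ω.drop (k.val + 1) := by
    have h := maskJ (ω.length - (k.val + 1)) (by omega)
    rw [show (k.val + 1) + (ω.length - (k.val + 1)) = ω.length by omega] at h
    rw [h, List.take_of_length_le (by rw [List.length_drop])]
  have hsplitI : maskWord ω (insert k J) ω.length = maskWord ω J k.val ++ ω.drop k.val := by
    have h := maskIns (ω.length - k.val) (by omega)
    rw [show k.val + (ω.length - k.val) = ω.length by omega] at h
    rw [h, List.take_of_length_le (by rw [List.length_drop])]
  -- reducedness facts
  have hvred : cs.length (cs.wordProd (maskWord ω J ω.length)) =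
      (maskWord ω J ω.length).length :=
    maskWord_reduced_of_pos cs ω J hposJ ω.length le_rfl
  have hDvred : cs.IsReduced (maskWord ω J ω.length) := hvred
  obtain ⟨hPwred, hTred⟩ := isReduced_append (hsplitJ ▸ hDvred)
  have hdropk : ω.drop k.val = ω.get k :: ω.drop (k.val + 1) := by
    rw [List.drop_eq_getElem_cons hkm]
    congr 1
  have hdkred : cs.IsReduced (ω.drop k.val) := hred.drop k.val
  have hdkw : cs.wordProd (ω.drop k.val) =
      cs.simple (ω.get k) * cs.wordProd (ω.drop (k.val + 1)) := by
    rw [hdropk, cs.wordProd_cons]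
  -- the key length inequality
  have hposk := hposJ k
  unfold prefixEl at hposk
  have hP : ¬ cs.length (cs.wordProd (maskWord ω J k.val) * cs.simple (ω.get k)) <
      cs.length (cs.wordProd (maskWord ω J k.val)) := by omega
  have hQ : cs.length (cs.wordProd (ω.drop (k.val + 1))) <
      cs.length (cs.simple (ω.get k) * cs.wordProd (ω.drop (k.val + 1))) := by
    have h1 : cs.length (cs.wordProd (ω.drop k.val)) = (ω.drop k.val).length := hdkred
    rw [hdkw] at h1
    have h2 := cs.length_wordProd_le (ω.drop (k.val + 1))
    rw [List.length_drop] at h1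
    rw [List.length_drop] at h2
    omega
  have hkey := key_ineq cs (cs.wordProd (maskWord ω J k.val))
    (cs.wordProd (ω.drop (k.val + 1))) (ω.get k) hP hQ
  -- products
  have hvPQ : v = cs.wordProd (maskWord ω J k.val) * cs.wordProd (ω.drop (k.val + 1)) := by
    rw [← hv, hsplitJ, cs.wordProd_append]
  have hu : cs.wordProd (maskWord ω (insert k J) ω.length) =
      cs.wordProd (maskWord ω J k.val) *
        (cs.simple (ω.get k) * cs.wordProd (ω.drop (k.val + 1))) := by
    rw [hsplitI, hdropk, cs.wordProd_append, cs.wordProd_cons]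
  have ht_refl : cs.IsReflection ((cs.wordProd (ω.drop (k.val + 1)))⁻¹ *
      cs.simple (ω.get k) * cs.wordProd (ω.drop (k.val + 1))) :=
    ⟨(cs.wordProd (ω.drop (k.val + 1)))⁻¹, ω.get k, by rw [inv_inv]⟩
  have hut : cs.wordProd (maskWord ω (insert k J) ω.length) =
      v * ((cs.wordProd (ω.drop (k.val + 1)))⁻¹ *
        cs.simple (ω.get k) * cs.wordProd (ω.drop (k.val + 1))) := by
    rw [hu, hvPQ]
    group
  -- length computations
  have hulen_lt : cs.length v < cs.length (cs.wordProd (maskWord ω (insert k J) ω.length)) := by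
    rw [hvPQ, hu]
    exact hkey
  have hDulen : (maskWord ω (insert k J) ω.length).length =
      (maskWord ω J ω.length).length + 1 := by
    rw [hsplitI, hsplitJ, hdropk]
    simp
    omega
  have hvlen : cs.length v = (maskWord ω J ω.length).length := by
    rw [← hv]
    exact hvred
  have hule := cs.length_wordProd_le (maskWord ω (insert k J) ω.length)
  have hueq : cs.length (cs.wordProd (maskWord ω (insert k J) ω.length)) =
      cs.length v + 1 := by omega
  have hured : cs.IsReduced (maskWord ω (insert k J) ω.length) := by
    unfold CoxeterSystem.IsReduced
    omega
  refine ⟨⟨rfl, ?_, ?_⟩, ⟨_, ht_refl, hut⟩, hueq⟩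
  · -- cardinality
    rw [Finset.card_insert_of_notMem hk, hcard, hueq]
  · -- positivity of the new mask
    intro r
    by_cases hrk : r.val ≤ k.val
    · have hpr := hposJ r
      unfold prefixEl at hpr ⊢
      rw [agree r.val hrk]
      exact hpr
    · push_neg at hrk
      have hr1 : maskWord ω (insert k J) (r.val + 1) =
          maskWord ω (insert k J) r.val ++ [ω.get r] := by
        rw [maskWord_succ ω (insert k J) r.val r.isLt]
        have hrmem : (⟨r.val, r.isLt⟩ : Fin ω.length) ∈ insert k J := by
          apply Finset.mem_insert_of_mem
          apply hkmax
          rw [Fin.lt_def]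
          exact hrk
        rw [if_pos hrmem]
      have hd1 : k.val + (r.val + 1 - k.val) = r.val + 1 := by omega
      have hIr1 := maskIns (r.val + 1 - k.val) (by omega)
      rw [hd1] at hIr1
      have hprefix : maskWord ω (insert k J) (r.val + 1) ++
          (ω.drop k.val).drop (r.val + 1 - k.val) =
          maskWord ω (insert k J) ω.length := by
        rw [hIr1, hsplitI, List.append_assoc, List.take_append_drop]
      have hred1 : cs.IsReduced (maskWord ω (insert k J) (r.val + 1)) :=
        (isReduced_append (cs := cs) (by rw [hprefix]; exact hured)).1
      unfold prefixEl
      have e2 : cs.wordProd (maskWord ω (insert k J) r.val) * cs.simple (ω.get r) =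
          cs.wordProd (maskWord ω (insert k J) (r.val + 1)) := by
        rw [hr1, cs.wordProd_append, cs.wordProd_singleton]
      rw [e2]
      have l1 : cs.length (cs.wordProd (maskWord ω (insert k J) (r.val + 1))) =
          (maskWord ω (insert k J) (r.val + 1)).length := hred1
      have l2 : (maskWord ω (insert k J) (r.val + 1)).length =
          (maskWord ω (insert k J) r.val).length + 1 := by
        rw [hr1]
        simp
      have l3 := cs.length_wordProd_le (maskWord ω (insert k J) r.val)
      omega


end PaperStmt
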